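/- Let n ≥ 1 be a natural number and g ≥ 0 a real number. Let a, b : ℕ → ℝ be sequences and k, k' ∈ {1, …, n} be break points such that: a_{i+1} − a_i = g for all 1 ≤ i ≤ k−1, and a_{i+1} − a_i = −g for all k+1 ≤ i ≤ n−1 (the increment a_{k+1} − a_k may be arbitrary); and analogously b_{i+1} − b_i = g for all 1 ≤ i ≤ k'−1, and b_{i+1} − b_i = −g for all k'+1 ≤ i ≤ n−1 (the increment b_{k'+1} − b_{k'} may be arbitrary). Then the maximum of the sequence a_i − b_i over i ∈ {1, …, n} is attained at one of at most four positions: there exists an index i* ∈ {k, k+1, k', k'+1} ∩ {1, …, n} such that a_j − b_j ≤ a_{i*} − b_{i*} for all j ∈ {1, …, n}. -/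
import Mathlib

private lemma step_le (f : ℕ → ℝ) (s : ℕ) :
    ∀ t, (∀ i, s ≤ i → i + 1 ≤ t → f i ≤ f (i + 1)) →
      ∀ j, s ≤ j → j ≤ t → f j ≤ f t := by
  intro t
  induction t with
  | zero => intro _ j _ hj; interval_cases j; exact le_refl _
  | succ t ih =>
    intro h j hs hj
    rcases Nat.eq_or_lt_of_le hj with rfl | hlt
    · exact le_refl _
    · have hjt : j ≤ t := Nat.lt_succ_iff.mp hlt
      have h1 : f j ≤ f t := ih (fun i hi hit => h i hi (by omega)) j hs hjt
      have h2 : f t ≤ f (t + 1) := h t (le_trans hs hjt) (le_refl _)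
      linarith

private lemma step_ge (f : ℕ → ℝ) (s t : ℕ)
    (h : ∀ i, s ≤ i → i + 1 ≤ t → f (i + 1) ≤ f i) :
    ∀ j, s ≤ j → j ≤ t → f j ≤ f s := by
  intro j hs hj
  induction j, hs using Nat.le_induction with
  | base => exact le_refl _
  | succ m hm ih =>
    have h1 : f (m + 1) ≤ f m := h m hm hj
    have h2 : f m ≤ f s := ih (by omega)
    linarith

/-- Lemma 6.1: for two sequences that are arithmetic with common difference `g`
up to a break point (`k` resp. `k'`) and common difference `-g` afterwards
(the increment at the break point being arbitrary), the maximum of their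
difference over `{1, …, n}` is attained at one of the at most four positions
`k, k+1, k', k'+1`. -/
theorem max_of_diff_of_piecewise_arithmetic
    (n : ℕ) (hn : 1 ≤ n) (g : ℝ) (hg : 0 ≤ g)
    (a b : ℕ → ℝ) (k k' : ℕ)
    (hk : k ∈ Finset.Icc 1 n) (hk' : k' ∈ Finset.Icc 1 n)
    (ha1 : ∀ i, 1 ≤ i → i + 1 ≤ k → a (i + 1) - a i = g)
    (ha2 : ∀ i, k + 1 ≤ i → i + 1 ≤ n → a (i + 1) - a i = -g)
    (hb1 : ∀ i, 1 ≤ i → i + 1 ≤ k' → b (i + 1) - b i = g)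
    (hb2 : ∀ i, k' + 1 ≤ i → i + 1 ≤ n → b (i + 1) - b i = -g) :
    ∃ i ∈ ({k, k + 1, k', k' + 1} : Finset ℕ) ∩ Finset.Icc 1 n,
      ∀ j ∈ Finset.Icc 1 n, a j - b j ≤ a i - b i := by
  simp only [Finset.mem_Icc] at hk hk'
  set S : Finset ℕ := ({k, k + 1, k', k' + 1} : Finset ℕ) ∩ Finset.Icc 1 n with hS
  set c : ℕ → ℝ := fun j => a j - b j with hc
  have memS : ∀ p, (p = k ∨ p = k + 1 ∨ p = k' ∨ p = k' + 1) → 1 ≤ p → p ≤ n →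
      p ∈ S := by
    intro p hp h1 h2
    simp only [hS, Finset.mem_inter, Finset.mem_insert, Finset.mem_Icc,
      Finset.mem_singleton]
    exact ⟨hp, h1, h2⟩
  have hkS : k ∈ S := memS k (Or.inl rfl) hk.1 hk.2
  obtain ⟨i, hiS, hmax⟩ := Finset.exists_max_image S c ⟨k, hkS⟩
  refine ⟨i, hiS, ?_⟩
  intro j hj
  simp only [Finset.mem_Icc] at hj
  have bound : ∀ p, p ∈ S → c j ≤ c p → a j - b j ≤ a i - b i :=
    fun p hp h => le_trans h (hmax p hp)
  rcases le_total k k' with hkk | hkk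
  · -- k ≤ k'
    by_cases hj2 : j ≤ k
    · have : c j ≤ c k := by
        refine step_le c 1 k ?_ j hj.1 hj2
        intro i h1 h2
        have e1 := ha1 i h1 h2
        have e2 := hb1 i h1 (by omega)
        show a i - b i ≤ a (i + 1) - b (i + 1)
        linarith
      exact bound k hkS this
    · by_cases hj3 : j ≤ k'
      · have : c j ≤ c (k + 1) := by
          refine step_ge c (k + 1) k' ?_ j (by omega) hj3
          intro i h1 h2
          have e1 := ha2 i h1 (by omega)
          have e2 := hb1 i (by omega) h2
          show a (i + 1) - b (i + 1) ≤ a i - b i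
          linarith
        exact bound (k + 1) (memS (k + 1) (by tauto) (by omega) (by omega)) this
      · have : c j ≤ c (k' + 1) := by
          refine step_ge c (k' + 1) n ?_ j (by omega) hj.2
          intro i h1 h2
          have e1 := ha2 i (by omega) h2
          have e2 := hb2 i h1 h2
          show a (i + 1) - b (i + 1) ≤ a i - b i
          linarith
        exact bound (k' + 1) (memS (k' + 1) (by tauto) (by omega) (by omega)) this
  · -- k' ≤ k
    by_cases hj2 : j ≤ k'
    · have : c j ≤ c k' := by
        refine step_le c 1 k' ?_ j hj.1 hj2
        intro i h1 h2
        have e1 := ha1 i h1 (by omega)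
        have e2 := hb1 i h1 h2
        show a i - b i ≤ a (i + 1) - b (i + 1)
        linarith
      exact bound k' (memS k' (by tauto) (by omega) (by omega)) this
    · by_cases hj3 : j ≤ k
      · have : c j ≤ c k := by
          refine step_le c (k' + 1) k ?_ j (by omega) hj3
          intro i h1 h2
          have e1 := ha1 i (by omega) h2
          have e2 := hb2 i h1 (by omega)
          show a i - b i ≤ a (i + 1) - b (i + 1)
          linarith
        exact bound k hkS this
      · have : c j ≤ c (k + 1) := by
          refine step_ge c (k + 1) n ?_ j (by omega) hj.2
          intro i h1 h2
          have e1 := ha2 i h1 h2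
          have e2 := hb2 i (by omega) h2
          show a (i + 1) - b (i + 1) ≤ a i - b i
          linarith
        exact bound (k + 1) (memS (k + 1) (by tauto) (by omega) (by omega)) this
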